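/- Let P be a finite PIP and x ∈ P, and let P_x = {y ∈ P : y is consistent with x and incomparable with x}, viewed as a sub-PIP. Then the faces C(I, M) of ⊞_P with x ∈ M are in order-preserving bijection with the faces of ⊞_{P_x}: given such (I, M), the pair (J, N) = (I \ ↓x, M \ {x}) is a face of ⊞_{P_x} (J is a consistent downset of P_x and N ⊆ max J), and conversely (I, M) = (J ∪ ↓x, N ∪ {x}); and C(I,M) ⊆ C(I',M') in ⊞_P iff the corresponding faces satisfy containment in ⊞_{P_x}. -/
import Mathlib


open Finset

variable {P : Type*} [Fintype P] [DecidableEq P] [PartialOrder P]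

/-- A subset is consistent if it contains no inconsistent pair. -/
def Consistent (incons : P → P → Prop) (S : Finset P) : Prop :=
  ∀ a ∈ S, ∀ b ∈ S, ¬ incons a b

/-- A downset (order ideal). -/
def IsDownset (I : Finset P) : Prop :=
  ∀ x ∈ I, ∀ y, y ≤ x → y ∈ I

open Classical in
/-- The maximal elements of a finite set. -/
noncomputable def maxElems (I : Finset P) : Finset P :=
  I.filter (fun x => ∀ y ∈ I, ¬ x < y)

open Classical in
/-- The downset generated by a set. -/
noncomputable def downGen (A : Finset P) : Finset P :=
  Finset.univ.filter (fun x => ∃ a ∈ A, x ≤ a)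

/-- A consistent antichain: the faces of the crossing complex `Δ_P`. -/
def ConsAntichain (incons : P → P → Prop) (A : Finset P) : Prop :=
  (∀ a ∈ A, ∀ b ∈ A, a ≠ b → ¬ a ≤ b) ∧ Consistent incons A

/-- A face of the cubical complex `⊞_P`: a pair (I, M) with I a consistent
downset and M ⊆ max I. -/
def IsFace (incons : P → P → Prop) (I M : Finset P) : Prop :=
  IsDownset I ∧ Consistent incons I ∧ M ⊆ maxElems I

/-- The face-containment order on faces of `⊞_P`:
`C(I',M') ⊆ C(I,M)` iff `M' ⊆ M` and `I \ M ⊆ I' ⊆ I`. -/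
def FaceLE (p q : Finset P × Finset P) : Prop :=
  p.2 ⊆ q.2 ∧ q.1 \ q.2 ⊆ p.1 ∧ p.1 ⊆ q.1

open Classical in
/-- The principal downset `↓x`. -/
noncomputable def downOf (x : P) : Finset P := Finset.univ.filter (· ≤ x)

open Classical in
/-- The sub-PIP `P_x` of elements consistent and incomparable with `x`
(the hyperplane PIP). -/
noncomputable def subPIP (incons : P → P → Prop) (x : P) : Finset P :=
  Finset.univ.filter (fun y => ¬ incons y x ∧ ¬ y ≤ x ∧ ¬ x ≤ y)

/-- A face of `⊞_{P_x}`: a consistent downset of the sub-PIP `P_x` together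
with a subset of its maximal elements. -/
def IsFaceSub (incons : P → P → Prop) (x : P) (J N : Finset P) : Prop :=
  J ⊆ subPIP incons x ∧
  (∀ a ∈ J, ∀ b ∈ subPIP incons x, b ≤ a → b ∈ J) ∧
  Consistent incons J ∧ N ⊆ maxElems J

lemma mem_downOf' {x y : P} : y ∈ downOf x ↔ y ≤ x := by
  simp [downOf]

lemma mem_subPIP' {incons : P → P → Prop} {x y : P} :
    y ∈ subPIP incons x ↔ ¬ incons y x ∧ ¬ y ≤ x ∧ ¬ x ≤ y := by
  simp [subPIP]

lemma mem_maxElems' {I : Finset P} {y : P} :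
    y ∈ maxElems I ↔ y ∈ I ∧ ∀ z ∈ I, ¬ y < z := by
  simp [maxElems]

/-- The faces `C(I,M)` of `⊞_P` with `x ∈ M` are in order-preserving
bijection with the faces of `⊞_{P_x}` via
`(I, M) ↦ (I \ ↓x, M \ {x})` with inverse `(J, N) ↦ (J ∪ ↓x, N ∪ {x})`. -/
theorem hyperplane_is_cubical_complex_of_subPIP (incons : P → P → Prop)
    (hirr : ∀ a, ¬ incons a a)
    (hsymm : ∀ a b, incons a b → incons b a)
    (hup : ∀ a b a' b', incons a b → a ≤ a' → b ≤ b' → incons a' b')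
    (x : P) :
    (∀ I M : Finset P, IsFace incons I M → x ∈ M →
        IsFaceSub incons x (I \ downOf x) (M.erase x) ∧
        (I \ downOf x) ∪ downOf x = I ∧ insert x (M.erase x) = M) ∧
    (∀ J N : Finset P, IsFaceSub incons x J N →
        IsFace incons (J ∪ downOf x) (insert x N) ∧
        (J ∪ downOf x) \ downOf x = J ∧ (insert x N).erase x = N) ∧
    (∀ I M I' M' : Finset P,
        IsFace incons I M → x ∈ M → IsFace incons I' M' → x ∈ M' →
        (FaceLE (I, M) (I', M') ↔
          FaceLE (I \ downOf x, M.erase x) (I' \ downOf x, M'.erase x))) := by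
  have hxsub : x ∉ subPIP incons x := by
    simp [mem_subPIP']
  refine ⟨?_, ?_, ?_⟩
  · rintro I M ⟨hdown, hcons, hM⟩ hxM
    have hxI : x ∈ I := (mem_maxElems'.1 (hM hxM)).1
    have hxmax : ∀ z ∈ I, ¬ x < z := (mem_maxElems'.1 (hM hxM)).2
    have hsub : I \ downOf x ⊆ subPIP incons x := by
      intro y hy
      rw [Finset.mem_sdiff, mem_downOf'] at hy
      obtain ⟨hyI, hylx⟩ := hy
      rw [mem_subPIP']
      refine ⟨hcons y hyI x hxI, hylx, fun hxy => ?_⟩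
      exact hxmax y hyI (lt_of_le_of_ne hxy (fun h => hylx h.symm.le))
    refine ⟨⟨hsub, ?_, ?_, ?_⟩, ?_, Finset.insert_erase hxM⟩
    · intro a ha b hb hba
      rw [Finset.mem_sdiff] at ha ⊢
      rw [mem_downOf']
      exact ⟨hdown a ha.1 b hba, (mem_subPIP'.1 hb).2.1⟩
    · intro a ha b hb
      rw [Finset.mem_sdiff] at ha hb
      exact hcons a ha.1 b hb.1
    · intro m hm
      rw [Finset.mem_erase] at hm
      have hmmax := mem_maxElems'.1 (hM hm.2)
      have hmJ : m ∈ I \ downOf x := by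
        rw [Finset.mem_sdiff, mem_downOf']
        exact ⟨hmmax.1, fun hle => hmmax.2 x hxI (lt_of_le_of_ne hle hm.1)⟩
      rw [mem_maxElems']
      exact ⟨hmJ, fun z hz => hmmax.2 z (Finset.mem_sdiff.1 hz).1⟩
    · apply Finset.sdiff_union_of_subset
      intro y hy
      exact hdown x hxI y (mem_downOf'.1 hy)
  · rintro J N ⟨hJsub, hJdown, hJcons, hN⟩
    have hJx : ∀ y ∈ J, ¬ y ≤ x ∧ ¬ x ≤ y ∧ ¬ incons y x := by
      intro y hy
      have := mem_subPIP'.1 (hJsub hy)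
      exact ⟨this.2.1, this.2.2, this.1⟩
    have hxJ : x ∉ J := fun h => hxsub (hJsub h)
    have hxN : x ∉ N := fun h => hxsub (hJsub (mem_maxElems'.1 (hN h)).1)
    refine ⟨⟨?_, ?_, ?_⟩, ?_, Finset.erase_insert hxN⟩
    · -- downset
      intro z hz y hyz
      rw [Finset.mem_union, mem_downOf'] at hz ⊢
      rcases hz with hzJ | hzx
      · by_cases hyx : y ≤ x
        · exact Or.inr hyx
        · refine Or.inl (hJdown z hzJ y ?_ hyz)
          rw [mem_subPIP']
          refine ⟨fun hi => (hJx z hzJ).2.2 (hup y x z x hi hyz le_rfl), hyx, fun hxy => ?_⟩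
          exact (hJx z hzJ).2.1 (hxy.trans hyz)
      · exact Or.inr (hyz.trans hzx)
    · -- consistent
      intro a ha b hb hab
      rw [Finset.mem_union, mem_downOf'] at ha hb
      rcases ha with haJ | hax <;> rcases hb with hbJ | hbx
      · exact hJcons a haJ b hbJ hab
      · exact (hJx a haJ).2.2 (hup a b a x hab le_rfl hbx)
      · exact (hJx b hbJ).2.2 (hup b a b x (hsymm a b hab) le_rfl hax)
      · exact hirr x (hup a b x x hab hax hbx)
    · -- insert x N ⊆ maxElems
      intro m hm
      rw [Finset.mem_insert] at hm
      rw [mem_maxElems']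
      rcases hm with rfl | hmN
      · refine ⟨Finset.mem_union_right _ (mem_downOf'.2 le_rfl), fun z hz hlt => ?_⟩
        rw [Finset.mem_union, mem_downOf'] at hz
        rcases hz with hzJ | hzx
        · exact (hJx z hzJ).2.1 hlt.le
        · exact absurd (hlt.trans_le hzx) (lt_irrefl _)
      · have hmmax := mem_maxElems'.1 (hN hmN)
        refine ⟨Finset.mem_union_left _ hmmax.1, fun z hz hlt => ?_⟩
        rw [Finset.mem_union, mem_downOf'] at hz
        rcases hz with hzJ | hzx
        · exact hmmax.2 z hzJ hlt
        · exact (hJx m hmmax.1).1 (hlt.le.trans hzx)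
    · -- sdiff identity
      ext y
      rw [Finset.mem_sdiff, Finset.mem_union]
      constructor
      · rintro ⟨h1 | h1, h2⟩
        · exact h1
        · exact absurd h1 h2
      · intro hy
        exact ⟨Or.inl hy, fun hd => (hJx y hy).1 (mem_downOf'.1 hd)⟩
  · rintro I M I' M' ⟨hdown, hcons, hM⟩ hxM ⟨hdown', hcons', hM'⟩ hxM'
    have hxI : x ∈ I := (mem_maxElems'.1 (hM hxM)).1
    have hxI' : x ∈ I' := (mem_maxElems'.1 (hM' hxM')).1
    constructor
    · rintro ⟨h1, h2, h3⟩
      refine ⟨Finset.erase_subset_erase x h1, ?_, Finset.sdiff_subset_sdiff h3 le_rfl⟩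
      intro z hz
      simp only [Finset.mem_sdiff, Finset.mem_erase, mem_downOf'] at hz ⊢
      obtain ⟨⟨hzI', hzx⟩, hzM⟩ := hz
      have hzne : z ≠ x := fun h => hzx (h.le)
      have : z ∉ M' := fun h => hzM ⟨hzne, h⟩
      exact ⟨h2 (Finset.mem_sdiff.2 ⟨hzI', this⟩), hzx⟩
    · rintro ⟨h1, h2, h3⟩
      refine ⟨?_, ?_, ?_⟩
      · intro m hm
        by_cases hmx : m = x
        · exact hmx ▸ hxM'
        · exact Finset.mem_of_mem_erase (h1 (Finset.mem_erase.2 ⟨hmx, hm⟩))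
      · intro z hz
        rw [Finset.mem_sdiff] at hz
        by_cases hzx : z ≤ x
        · exact hdown x hxI z hzx
        · have hzM'e : z ∉ M'.erase x := fun h => hz.2 (Finset.mem_of_mem_erase h)
          have : z ∈ (I' \ downOf x) \ M'.erase x := by
            rw [Finset.mem_sdiff, Finset.mem_sdiff, mem_downOf']
            exact ⟨⟨hz.1, hzx⟩, hzM'e⟩
          exact (Finset.mem_sdiff.1 (h2 this)).1
      · intro z hz
        by_cases hzx : z ≤ x
        · exact hdown' x hxI' z hzx
        · have : z ∈ I \ downOf x := by
            rw [Finset.mem_sdiff, mem_downOf']; exact ⟨hz, hzx⟩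
          exact (Finset.mem_sdiff.1 (h3 this)).1
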